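/- Generalized minimum-error test optimality (full statement): Let Q be a probability distribution on finite X, {m_θ}_{θ∈Θ} a finite family of metrics X × Y → ℝ, p_θ(x,y) = Q{x' : m_θ(x',y) ≥ m_θ(x,y)}, u(x,y) = min_θ p_θ(x,y), and K = max_{y∈Y} Σ_{x: Q(x)>0} Q(x)/u(x,y). Suppose further that Q is normal with constant C, meaning E_{X∼Q}[1/p(X)] ≤ C for every function of the form p(x) = Q{m(·) ≥ m(x)}. Then K ≤ |Θ|·C, and for every θ, x, y: Q{x' : u(x',y) ≤ u(x,y)} ≤ |Θ|·C·p_θ(x,y). -/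

import Mathlib

open Finset

/-- Generalized minimum-error test optimality: if `Q` is normal with constant
`C`, then the GMET redundancy satisfies `K ≤ |Θ|·C` and the GMET pairwise
error is within a factor `|Θ|·C` of every metric's pairwise error. -/
theorem gmet_optimality
    {X Y Θ : Type*} [Fintype X] [Fintype Y] [Fintype Θ]
    [Nonempty X] [Nonempty Y] [Nonempty Θ]
    (Q : X → ℝ) (hQ0 : ∀ x, 0 ≤ Q x) (hQ1 : ∑ x, Q x = 1)
    (m : Θ → X → Y → ℝ)
    (p : Θ → X → Y → ℝ)
    (hp : ∀ θ x y, p θ x y = ∑ x' ∈ univ.filter (fun x' => m θ x y ≤ m θ x' y), Q x')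
    (u : X → Y → ℝ) (hu : ∀ x y, u x y = univ.inf' univ_nonempty (fun θ => p θ x y))
    (K : ℝ)
    (hK : K = univ.sup' univ_nonempty
      (fun y => ∑ x ∈ univ.filter (fun x => 0 < Q x), Q x / u x y))
    (C : ℝ) (hC0 : 0 ≤ C)
    (hC : ∀ mm : X → ℝ,
      ∑ x, Q x * (1 / ∑ x' ∈ univ.filter (fun x' => mm x ≤ mm x'), Q x') ≤ C) :
    K ≤ (Fintype.card Θ : ℝ) * C ∧
    ∀ θ x y, ∑ x' ∈ univ.filter (fun x' => u x' y ≤ u x y), Q x'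
      ≤ (Fintype.card Θ : ℝ) * C * p θ x y := by
  classical
  have hp_nonneg : ∀ θ x y, 0 ≤ p θ x y := fun θ x y => by
    rw [hp]; exact Finset.sum_nonneg fun x' _ => hQ0 x'
  have hp_ge : ∀ θ x y, Q x ≤ p θ x y := fun θ x y => by
    rw [hp]
    exact Finset.single_le_sum (fun x' _ => hQ0 x') (by simp)
  have hu_le : ∀ θ x y, u x y ≤ p θ x y := fun θ x y => by
    rw [hu]; exact Finset.inf'_le _ (mem_univ θ)
  have hu_ge : ∀ x y, Q x ≤ u x y := fun x y => by
    rw [hu]; exact Finset.le_inf' _ _ fun θ _ => hp_ge θ x y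
  have hu_nonneg : ∀ x y, 0 ≤ u x y := fun x y => le_trans (hQ0 x) (hu_ge x y)
  -- part 1: for each y the sum is ≤ |Θ|·C
  have main : ∀ y : Y,
      ∑ x ∈ univ.filter (fun x => 0 < Q x), Q x / u x y
        ≤ (Fintype.card Θ : ℝ) * C := by
    intro y
    have step3 : ∀ θ : Θ,
        ∑ x ∈ univ.filter (fun x => 0 < Q x), Q x / p θ x y ≤ C := by
      intro θ
      have hfull : ∑ x ∈ univ.filter (fun x => 0 < Q x), Q x / p θ x y
          = ∑ x, Q x / p θ x y := by
        refine Finset.sum_subset (filter_subset _ _) ?_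
        intro x _ hx
        have : Q x = 0 := by
          by_contra h
          exact hx (mem_filter.mpr ⟨mem_univ x, lt_of_le_of_ne (hQ0 x) (Ne.symm h)⟩)
        simp [this]
      rw [hfull]
      have := hC (fun x => m θ x y)
      calc ∑ x, Q x / p θ x y
          = ∑ x, Q x * (1 / ∑ x' ∈ univ.filter (fun x' => m θ x y ≤ m θ x' y), Q x') := by
            refine Finset.sum_congr rfl fun x _ => ?_
            rw [hp, div_eq_mul_one_div]
        _ ≤ C := this
    calc ∑ x ∈ univ.filter (fun x => 0 < Q x), Q x / u x y
        ≤ ∑ x ∈ univ.filter (fun x => 0 < Q x), ∑ θ : Θ, Q x / p θ x y := by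
          refine Finset.sum_le_sum fun x hx => ?_
          obtain ⟨θ₀, _, hθ₀⟩ := Finset.exists_mem_eq_inf' (univ_nonempty)
            (fun θ => p θ x y)
          rw [hu, hθ₀]
          exact Finset.single_le_sum
            (fun θ _ => div_nonneg (hQ0 x) (hp_nonneg θ x y)) (mem_univ θ₀)
      _ = ∑ θ : Θ, ∑ x ∈ univ.filter (fun x => 0 < Q x), Q x / p θ x y :=
          Finset.sum_comm
      _ ≤ ∑ _θ : Θ, C := Finset.sum_le_sum fun θ _ => step3 θ
      _ = (Fintype.card Θ : ℝ) * C := by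
          rw [Finset.sum_const, card_univ, nsmul_eq_mul]
  have hK1 : K ≤ (Fintype.card Θ : ℝ) * C := by
    rw [hK]; exact Finset.sup'_le _ _ fun y _ => main y
  refine ⟨hK1, ?_⟩
  intro θ x y
  set f : X → ℝ := fun x' => Q x' / u x' y with hf
  have hf_nonneg : ∀ x', 0 ≤ f x' := fun x' =>
    div_nonneg (hQ0 x') (hu_nonneg x' y)
  have hfK : ∑ x' ∈ univ.filter (fun x' => u x' y ≤ u x y), f x' ≤ K := by
    have h1 : ∑ x' ∈ univ.filter (fun x' => u x' y ≤ u x y), f x'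
        ≤ ∑ x', f x' :=
      Finset.sum_le_sum_of_subset_of_nonneg (subset_univ _)
        (fun x' _ _ => hf_nonneg x')
    have h2 : ∑ x' ∈ univ.filter (fun x' => 0 < Q x'), f x' = ∑ x', f x' := by
      refine Finset.sum_subset (filter_subset _ _) ?_
      intro x' _ hx'
      have : Q x' = 0 := by
        by_contra h
        exact hx' (mem_filter.mpr ⟨mem_univ x', lt_of_le_of_ne (hQ0 x') (Ne.symm h)⟩)
      simp [hf, this]
    have h3 : ∑ x' ∈ univ.filter (fun x' => 0 < Q x'), f x' ≤ K := by
      rw [hK]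
      exact Finset.le_sup' (fun y => ∑ x ∈ univ.filter (fun x => 0 < Q x), Q x / u x y)
        (mem_univ y)
    linarith
  have pointwise : ∀ x' ∈ univ.filter (fun x' => u x' y ≤ u x y),
      Q x' ≤ u x y * f x' := by
    intro x' hx'
    have hle : u x' y ≤ u x y := (mem_filter.mp hx').2
    rcases eq_or_lt_of_le (hQ0 x') with h0 | h0
    · simp [hf, ← h0]
    · have hupos : 0 < u x' y := lt_of_lt_of_le h0 (hu_ge x' y)
      have : Q x' = u x' y * f x' := by
        simp only [hf]; field_simp
      rw [this]
      exact mul_le_mul_of_nonneg_right hle (hf_nonneg x')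
  calc ∑ x' ∈ univ.filter (fun x' => u x' y ≤ u x y), Q x'
      ≤ ∑ x' ∈ univ.filter (fun x' => u x' y ≤ u x y), u x y * f x' :=
        Finset.sum_le_sum pointwise
    _ = u x y * ∑ x' ∈ univ.filter (fun x' => u x' y ≤ u x y), f x' := by
        rw [Finset.mul_sum]
    _ ≤ u x y * K := mul_le_mul_of_nonneg_left hfK (hu_nonneg x y)
    _ ≤ u x y * ((Fintype.card Θ : ℝ) * C) :=
        mul_le_mul_of_nonneg_left hK1 (hu_nonneg x y)
    _ ≤ p θ x y * ((Fintype.card Θ : ℝ) * C) :=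
        mul_le_mul_of_nonneg_right (hu_le θ x y)
          (mul_nonneg (Nat.cast_nonneg _) hC0)
    _ = (Fintype.card Θ : ℝ) * C * p θ x y := mul_comm _ _
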